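/- Let φ, ψ : ℂ → ℂ be entire functions with ψ nowhere vanishing, and let τ_n : ℂ → ℂ (n ∈ ℤ) be entire functions satisfying the Toda equation τ_n''·τ_n − (τ_n')² = τ_{n+1}·τ_{n-1} − φψ·τ_n² for all n ∈ ℤ, with τ₋₁ = ψ. Then the functions τ̃_n := τ_n/ψ satisfy the modified Toda equation τ̃_n''·τ̃_n − (τ̃_n')² = τ̃_{n+1}·τ̃_{n-1} − ((ψ''ψ − (ψ')² + φψ³)/ψ²)·τ̃_n² for all n ∈ ℤ and all x ∈ ℂ. -/

import Mathlib

/-- The derivative of an entire function is entire. -/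
lemma differentiable_deriv_of_differentiable (f : ℂ → ℂ) (hf : Differentiable ℂ f) :
    Differentiable ℂ (deriv f) :=
  Complex.analyticOnNhd_univ_iff_differentiable.mp
    (Complex.analyticOnNhd_univ_iff_differentiable.mpr hf).deriv

/-- **Renormalization of the Toda equation** (step in the proof of Proposition 3.4).
If the entire functions `τ_n` satisfy the Toda equation
`τ_n'' τ_n − (τ_n')² = τ_{n+1} τ_{n-1} − φψ τ_n²` with `τ₋₁ = ψ` (`ψ` nowhere vanishing),
then `τ̃_n = τ_n/ψ` satisfies
`τ̃_n'' τ̃_n − (τ̃_n')² = τ̃_{n+1} τ̃_{n-1} − ((ψ''ψ − (ψ')² + φψ³)/ψ²) τ̃_n²`. -/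
theorem renormalized_toda_equation
    (φ ψ : ℂ → ℂ) (hφ : Differentiable ℂ φ) (hψ : Differentiable ℂ ψ)
    (hψ0 : ∀ x : ℂ, ψ x ≠ 0)
    (τ : ℤ → ℂ → ℂ) (hτdiff : ∀ n : ℤ, Differentiable ℂ (τ n))
    (hτm1 : τ (-1) = ψ)
    (htoda : ∀ (n : ℤ) (x : ℂ),
      deriv (deriv (τ n)) x * τ n x - (deriv (τ n) x) ^ 2 =
        τ (n + 1) x * τ (n - 1) x - φ x * ψ x * (τ n x) ^ 2) :
    ∀ (n : ℤ) (x : ℂ),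
      deriv (deriv (fun y => τ n y / ψ y)) x * (τ n x / ψ x)
          - (deriv (fun y => τ n y / ψ y) x) ^ 2 =
        (τ (n + 1) x / ψ x) * (τ (n - 1) x / ψ x)
          - ((deriv (deriv ψ) x * ψ x - (deriv ψ x) ^ 2 + φ x * (ψ x) ^ 3) / (ψ x) ^ 2)
            * (τ n x / ψ x) ^ 2 := by
  intro n x
  have hf : Differentiable ℂ (τ n) := hτdiff n
  have hf' : Differentiable ℂ (deriv (τ n)) := differentiable_deriv_of_differentiable _ hf
  have hψ' : Differentiable ℂ (deriv ψ) := differentiable_deriv_of_differentiable _ hψ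
  have key : deriv (fun y => τ n y / ψ y)
      = fun y => (deriv (τ n) y * ψ y - τ n y * deriv ψ y) / ψ y ^ 2 :=
    funext fun y => deriv_div (hf y) (hψ y) (hψ0 y)
  have h1 : deriv (fun y => τ n y / ψ y) x
      = (deriv (τ n) x * ψ x - τ n x * deriv ψ x) / ψ x ^ 2 := by rw [key]
  have hnum : DifferentiableAt ℂ (fun y => deriv (τ n) y * ψ y - τ n y * deriv ψ y) x :=
    ((hf'.mul hψ).sub (hf.mul hψ')) x
  have hden : DifferentiableAt ℂ (fun y => ψ y ^ 2) x := (hψ.pow 2) x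
  have hd1 : deriv (fun y => deriv (τ n) y * ψ y - τ n y * deriv ψ y) x
      = (deriv (deriv (τ n)) x * ψ x + deriv (τ n) x * deriv ψ x)
        - (deriv (τ n) x * deriv ψ x + τ n x * deriv (deriv ψ) x) := by
    rw [deriv_fun_sub ((hf' x).fun_mul (hψ x)) ((hf x).fun_mul (hψ' x)),
        deriv_fun_mul (hf' x) (hψ x), deriv_fun_mul (hf x) (hψ' x)]
  have hd2 : deriv (fun y => ψ y ^ 2) x = 2 * ψ x * deriv ψ x := by
    rw [deriv_fun_pow (hψ x) 2]; ring
  have h2 : deriv (deriv (fun y => τ n y / ψ y)) x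
      = (((deriv (deriv (τ n)) x * ψ x + deriv (τ n) x * deriv ψ x)
            - (deriv (τ n) x * deriv ψ x + τ n x * deriv (deriv ψ) x)) * ψ x ^ 2
          - (deriv (τ n) x * ψ x - τ n x * deriv ψ x) * (2 * ψ x * deriv ψ x))
          / (ψ x ^ 2) ^ 2 := by
    rw [key, deriv_fun_div hnum hden (pow_ne_zero 2 (hψ0 x)), hd1, hd2]
  rw [h1, h2]
  have hne := hψ0 x
  field_simp
  linear_combination (ψ x) ^ 2 * htoda n x
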